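/- If $f \perp g$ in $A^\sim$ (i.e., $|f| \wedge |g| = 0$), then $F \cdot f \perp G \cdot g$ for all $F, G \in (A^\sim)^\sim_n$. -/

import Mathlib

noncomputable section

/-- Riesz space (real vector lattice) axioms, as a `Prop`-valued class. -/
class RieszSp (E : Type*) [AddCommGroup E] [Lattice E] [Module ℝ E] : Prop where
  add_le_add_left : ∀ a b : E, a ≤ b → ∀ c : E, c + a ≤ c + b
  smul_nonneg : ∀ (r : ℝ) (a : E), 0 ≤ r → 0 ≤ a → 0 ≤ r • a

/-- Archimedean (real) f-algebra axioms, as a `Prop`-valued class. -/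
class FAlg (A : Type*) [CommRing A] [Lattice A] [Module ℝ A] extends RieszSp A : Prop where
  mul_nonneg : ∀ a b : A, 0 ≤ a → 0 ≤ b → 0 ≤ a * b
  disjoint_mul : ∀ a b c : A, a ⊓ b = 0 → 0 ≤ c → (c * a) ⊓ b = 0
  archimedean : ∀ a b : A, (∀ n : ℕ, (n : ℝ) • a ≤ b) → a ≤ 0

/-- A linear functional is order bounded if it is bounded on order intervals. -/
def OrderBddFn {E : Type*} [AddCommGroup E] [Lattice E] [Module ℝ E]
    (φ : E →ₗ[ℝ] ℝ) : Prop :=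
  ∀ a b : E, ∃ M : ℝ, ∀ x : E, a ≤ x → x ≤ b → |φ x| ≤ M

/-- A linear functional is order continuous if it sends downward directed sets with
infimum `0` to nets converging to `0`. -/
def OrdContFn {E : Type*} [AddCommGroup E] [Lattice E] [Module ℝ E]
    (φ : E →ₗ[ℝ] ℝ) : Prop :=
  ∀ s : Set E, s.Nonempty → DirectedOn (· ≥ ·) s → IsGLB s 0 →
    ∀ ε : ℝ, 0 < ε → ∃ d ∈ s, ∀ d' ∈ s, d' ≤ d → |φ d'| < ε

/-- The data realizing `D` as the order dual `A^∼` of the f-algebra `A` (with separating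
order dual) and `N` as the order continuous part `(A^∼)^∼_n` of the order bidual of `A`,
together with the Arens multiplication and its actions. -/
class DualSetting (A : Type*) [CommRing A] [Lattice A] [Module ℝ A]
    (D : Type*) [AddCommGroup D] [Lattice D] [Module ℝ D]
    (N : Type*) [CommRing N] [Lattice N] [Module ℝ N] where
  dual : D →ₗ[ℝ] A →ₗ[ℝ] ℝ
  bidual : N →ₗ[ℝ] D →ₗ[ℝ] ℝ
  dual_inj : Function.Injective dual
  bidual_inj : Function.Injective bidual
  dual_bdd : ∀ d : D, OrderBddFn (dual d)
  dual_surj : ∀ φ : A →ₗ[ℝ] ℝ, OrderBddFn φ → ∃ d : D, dual d = φ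
  dual_order : ∀ d : D, 0 ≤ d ↔ ∀ a : A, 0 ≤ a → 0 ≤ dual d a
  bidual_bdd : ∀ F : N, OrderBddFn (bidual F)
  bidual_cont : ∀ F : N, OrdContFn (bidual F)
  bidual_surj : ∀ Φ : D →ₗ[ℝ] ℝ, OrderBddFn Φ → OrdContFn Φ → ∃ F : N, bidual F = Φ
  bidual_order : ∀ F : N, 0 ≤ F ↔ ∀ d : D, 0 ≤ d → 0 ≤ bidual F d
  separating : ∀ a : A, (∀ d : D, dual d a = 0) → a = 0
  /-- the action `f ⋅ a` of `A` on `A^∼`:  `(f ⋅ a)(b) = f (a b)` -/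
  dsmul : A → D → D
  dsmul_eval : ∀ (a : A) (f : D) (b : A), dual (dsmul a f) b = dual f (a * b)
  /-- the action `F ⋅ f` of `(A^∼)^∼_n` on `A^∼`:  `(F ⋅ f)(a) = F (f ⋅ a)` -/
  nsmul : N → D → D
  nsmul_eval : ∀ (F : N) (f : D) (a : A), dual (nsmul F f) a = bidual F (dsmul a f)
  /-- the Arens product on `(A^∼)^∼_n`:  `(F * G)(f) = F (G ⋅ f)` -/
  mul_eval : ∀ (F G : N) (f : D), bidual (F * G) f = bidual F (nsmul G f)

section LatticeAux
variable {X : Type*} [AddCommGroup X] [Lattice X] [Module ℝ X] [RieszSp X]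

instance (priority := 100) RieszSp.toAddLeftMono : AddLeftMono X :=
  ⟨fun c a b h => RieszSp.add_le_add_left a b h c⟩

lemma rsmul_mono {r : ℝ} (hr : 0 ≤ r) {x y : X} (h : x ≤ y) : r • x ≤ r • y := by
  have h2 := RieszSp.smul_nonneg r (y - x) hr (sub_nonneg.2 h)
  rw [smul_sub] at h2
  exact sub_nonneg.1 h2

lemma rsmul_posPart {r : ℝ} (hr : 0 ≤ r) (x : X) : (r • x)⁺ = r • x⁺ := by
  rcases eq_or_lt_of_le hr with h | h
  · simp [← h]
  · apply le_antisymm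
    · rw [posPart_def, posPart_def]
      refine sup_le (rsmul_mono hr le_sup_left) ?_
      exact RieszSp.smul_nonneg r _ hr le_sup_right
    · have h1 : x⁺ ≤ r⁻¹ • ((r • x) ⊔ 0) := by
        rw [posPart_def]
        refine sup_le ?_ ?_
        · have h2 := rsmul_mono (inv_nonneg.2 hr) (le_sup_left : r • x ≤ (r • x) ⊔ 0)
          rwa [inv_smul_smul₀ h.ne'] at h2
        · exact RieszSp.smul_nonneg _ _ (inv_nonneg.2 hr) le_sup_right
      have h2 := rsmul_mono hr h1
      rw [smul_inv_smul₀ h.ne'] at h2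
      rwa [posPart_def]

lemma rsmul_negPart {r : ℝ} (hr : 0 ≤ r) (x : X) : (r • x)⁻ = r • x⁻ := by
  rw [← posPart_neg, ← posPart_neg, ← smul_neg, rsmul_posPart hr]

lemma nsmul_inf_eq_zero {u v : X} (hu : 0 ≤ u) (hv : 0 ≤ v) (h : u ⊓ v = 0) (n : ℕ) :
    (n • u) ⊓ v = 0 := by
  induction n with
  | zero => rw [zero_nsmul]; exact inf_eq_left.2 hv
  | succ n ih =>
    have hw0 : 0 ≤ ((n + 1) • u) ⊓ v := le_inf (nsmul_nonneg hu _) hv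
    have h1 : ((n + 1) • u) ⊓ v - n • u ≤ u := by
      have h2 : ((n + 1) • u) ⊓ v ≤ n • u + u := by
        rw [← succ_nsmul]; exact inf_le_left
      exact sub_le_iff_le_add'.2 h2
    have h2 : ((n + 1) • u) ⊓ v - n • u ≤ v :=
      le_trans (sub_le_self _ (nsmul_nonneg hu n)) inf_le_right
    have hp : (((n + 1) • u) ⊓ v - n • u)⁺ ≤ u ⊓ v := by
      refine le_inf ?_ ?_
      · rw [posPart_def]; exact sup_le h1 hu
      · rw [posPart_def]; exact sup_le h2 hv
    rw [h] at hp
    have h3 : ((n + 1) • u) ⊓ v - n • u ≤ 0 := (le_posPart _).trans hp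
    have h4 : ((n + 1) • u) ⊓ v ≤ (n • u) ⊓ v := le_inf (sub_nonpos.1 h3) inf_le_right
    rw [ih] at h4
    exact le_antisymm h4 hw0

lemma inf_add_posPart_sub (x y : X) : x ⊓ y + (x - y)⁺ = x := by
  have h1 : (x - y)⁺ = (x ⊔ y) - y := by
    rw [posPart_def, sup_sub, sub_self]
  rw [h1, ← add_sub_assoc, inf_add_sup, add_sub_cancel_right]

lemma extend_cone (p : X → ℝ)
    (hadd : ∀ x y : X, 0 ≤ x → 0 ≤ y → p (x + y) = p x + p y)
    (hsmul : ∀ (r : ℝ) (x : X), 0 ≤ r → 0 ≤ x → p (r • x) = r * p x) :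
    ∃ φ : X →ₗ[ℝ] ℝ, ∀ x : X, 0 ≤ x → φ x = p x := by
  have h0 : p 0 = 0 := by
    have := hsmul 0 0 le_rfl le_rfl
    simpa using this
  have key : ∀ (x u v : X), 0 ≤ u → 0 ≤ v → x = u - v → p x⁺ - p x⁻ = p u - p v := by
    intro x u v hu hv hx
    have h1 : x⁺ + v = x⁻ + u := by
      have h2 : x⁺ - x⁻ = u - v := by rw [posPart_sub_negPart, hx]
      rw [sub_eq_sub_iff_add_eq_add] at h2
      rw [h2]; abel
    have h3 := congrArg p h1
    rw [hadd _ _ (posPart_nonneg x) hv, hadd _ _ (negPart_nonneg x) hu] at h3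
    linarith
  refine ⟨{ toFun := fun x => p x⁺ - p x⁻, map_add' := ?_, map_smul' := ?_ }, ?_⟩
  · intro x y
    have hx := key (x + y) (x⁺ + y⁺) (x⁻ + y⁻)
      (add_nonneg (posPart_nonneg x) (posPart_nonneg y))
      (add_nonneg (negPart_nonneg x) (negPart_nonneg y))
      (by conv_lhs => rw [← posPart_sub_negPart x, ← posPart_sub_negPart y]
          abel)
    rw [hx, hadd _ _ (posPart_nonneg x) (posPart_nonneg y),
      hadd _ _ (negPart_nonneg x) (negPart_nonneg y)]
    ring
  · intro r x
    simp only [RingHom.id_apply, smul_eq_mul]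
    rcases le_or_gt 0 r with hr | hr
    · rw [rsmul_posPart hr, rsmul_negPart hr, hsmul r _ hr (posPart_nonneg x),
        hsmul r _ hr (negPart_nonneg x)]
      ring
    · have h1 : r • x = -((-r) • x) := by rw [neg_smul, neg_neg]
      have hr' : (0:ℝ) ≤ -r := by linarith
      rw [h1, posPart_neg, negPart_neg, rsmul_posPart hr', rsmul_negPart hr',
        hsmul _ _ hr' (posPart_nonneg x), hsmul _ _ hr' (negPart_nonneg x)]
      ring
  · intro x hx
    simp only [LinearMap.coe_mk, AddHom.coe_mk]
    rw [posPart_eq_self.2 hx, negPart_eq_zero.2 hx, h0, sub_zero]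

end LatticeAux

section FAlgAux
variable {A : Type*} [CommRing A] [Lattice A] [Module ℝ A] [FAlg A]

lemma amul_mono {a b c : A} (h : a ≤ b) (hc : 0 ≤ c) : a * c ≤ b * c := by
  have h2 := FAlg.mul_nonneg (b - a) c (sub_nonneg.2 h) hc
  rw [sub_mul] at h2
  exact sub_nonneg.1 h2

lemma mul_self_nonneg' (x : A) : 0 ≤ x * x := by
  have d1 : (x⁻ * x⁺) ⊓ x⁻ = 0 :=
    FAlg.disjoint_mul x⁺ x⁻ x⁻ (posPart_inf_negPart_eq_zero x) (negPart_nonneg x)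
  have d2 : (x⁺ * x⁻) ⊓ (x⁻ * x⁺) = 0 :=
    FAlg.disjoint_mul x⁻ (x⁻ * x⁺) x⁺ (by rw [inf_comm]; exact d1) (posPart_nonneg x)
  have hw : x⁺ * x⁻ = 0 := by
    rw [mul_comm x⁻ x⁺] at d2
    simpa using d2
  have h3 : x * x = x⁺ * x⁺ + x⁻ * x⁻ - (x⁺ * x⁻ + x⁺ * x⁻) := by
    conv_lhs => rw [← posPart_sub_negPart x]
    ring
  rw [h3, hw, add_zero, sub_zero]
  exact add_nonneg (FAlg.mul_nonneg _ _ (posPart_nonneg x) (posPart_nonneg x))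
    (FAlg.mul_nonneg _ _ (negPart_nonneg x) (negPart_nonneg x))

lemma ineq_E1 (a x w : A) (ha : 0 ≤ a) (hx : 0 ≤ x) (hw : 0 ≤ w) (hwax : w ≤ a * x) (n : ℕ) :
    n • (a * (x - n • (a * x - w))⁺) ≤ n • w + x := by
  set s := a * x - w with hs
  have hs0 : 0 ≤ s := sub_nonneg.2 hwax
  set p := (x - n • s)⁺ with hp
  set q := (x - n • s)⁻ with hq
  have hpq : p ⊓ q = 0 := posPart_inf_negPart_eq_zero _
  have hp0 : 0 ≤ p := posPart_nonneg _
  have hq0 : 0 ≤ q := negPart_nonneg _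
  have hpx : p ≤ x := by
    rw [hp]
    exact (posPart_mono (sub_le_self _ (nsmul_nonneg hs0 n))).trans_eq (posPart_eq_self.2 hx)
  have hap : 0 ≤ a * p := FAlg.mul_nonneg _ _ ha hp0
  have hqle : n • s - x ≤ q := by
    rw [hq, negPart_def, neg_sub]
    exact le_sup_left
  have key : n • (a * p) - (n • w + x) ≤ q := by
    have h1 : n • (a * p) - (n • w + x) = n • (a * p - a * x) + (n • s - x) := by
      simp only [hs, nsmul_eq_mul]
      ring
    rw [h1]
    have h2 : n • (a * p - a * x) ≤ 0 := by
      have h3 : a * p - a * x ≤ 0 := by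
        have h4 := FAlg.mul_nonneg a (x - p) ha (sub_nonneg.2 hpx)
        rw [mul_sub] at h4
        exact sub_nonpos.2 (sub_nonneg.1 h4)
      calc n • (a * p - a * x) ≤ n • (0 : A) := nsmul_le_nsmul_right h3 n
        _ = 0 := smul_zero n
    calc n • (a * p - a * x) + (n • s - x) ≤ 0 + q := add_le_add h2 hqle
      _ = q := zero_add q
  have hz1 : (n • (a * p) - (n • w + x))⁺ ≤ q :=
    (posPart_mono key).trans_eq (posPart_eq_self.2 hq0)
  have hz2 : (n • (a * p) - (n • w + x))⁺ ≤ n • (a * p) := by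
    rw [posPart_def]
    exact sup_le (sub_le_self _ (add_nonneg (nsmul_nonneg hw n) hx)) (nsmul_nonneg hap n)
  have hdis : (n • (a * p)) ⊓ q = 0 :=
    nsmul_inf_eq_zero hap hq0 (FAlg.disjoint_mul p q a hpq ha) n
  have hz : (n • (a * p) - (n • w + x))⁺ ≤ 0 := by
    rw [← hdis]; exact le_inf hz2 hz1
  exact sub_nonpos.1 ((le_posPart _).trans hz)

lemma ineq_E2 (a x : A) (ha : 0 ≤ a) (hx : 0 ≤ x) (n : ℕ) :
    n • (a * (x - n • a)⁺) ≤ x * x := by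
  set p := (x - n • a)⁺ with hp
  set q := (x - n • a)⁻ with hq
  have hpq : p ⊓ q = 0 := posPart_inf_negPart_eq_zero _
  have hp0 : 0 ≤ p := posPart_nonneg _
  have hq0 : 0 ≤ q := negPart_nonneg _
  have hpx : p ≤ x := by
    rw [hp]
    exact (posPart_mono (sub_le_self _ (nsmul_nonneg ha n))).trans_eq (posPart_eq_self.2 hx)
  have hap : 0 ≤ a * p := FAlg.mul_nonneg _ _ ha hp0
  have hqp0 : 0 ≤ q * p := FAlg.mul_nonneg _ _ hq0 hp0
  have hqle : n • a - x ≤ q := by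
    rw [hq, negPart_def, neg_sub]
    exact le_sup_left
  have key : n • (a * p) - x * x ≤ q * p := by
    have h1 : n • (a * p) - x * x = (n • a - x) * p + (x * p - x * x) := by
      simp only [nsmul_eq_mul]
      ring
    rw [h1]
    have h2 : (n • a - x) * p ≤ q * p := amul_mono hqle hp0
    have h3 : x * p - x * x ≤ 0 := by
      have h4 := FAlg.mul_nonneg x (x - p) hx (sub_nonneg.2 hpx)
      rw [mul_sub] at h4
      exact sub_nonpos.2 (sub_nonneg.1 h4)
    calc (n • a - x) * p + (x * p - x * x) ≤ q * p + 0 := add_le_add h2 h3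
      _ = q * p := add_zero _
  have hz1 : (n • (a * p) - x * x)⁺ ≤ q * p :=
    (posPart_mono key).trans_eq (posPart_eq_self.2 hqp0)
  have hz2 : (n • (a * p) - x * x)⁺ ≤ n • (a * p) := by
    rw [posPart_def]
    exact sup_le (sub_le_self _ (mul_self_nonneg' x)) (nsmul_nonneg hap n)
  have d1 : (a * p) ⊓ q = 0 := FAlg.disjoint_mul p q a hpq ha
  have d2 : (p * q) ⊓ (a * p) = 0 :=
    FAlg.disjoint_mul q (a * p) p (by rw [inf_comm]; exact d1) hp0
  have hdis : (n • (a * p)) ⊓ (q * p) = 0 := by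
    refine nsmul_inf_eq_zero hap hqp0 ?_ n
    rw [inf_comm, mul_comm q p]
    exact d2
  have hz : (n • (a * p) - x * x)⁺ ≤ 0 := by
    rw [← hdis]; exact le_inf hz2 hz1
  exact sub_nonpos.1 ((le_posPart _).trans hz)

end FAlgAux

set_option linter.unusedSectionVars false

section DualAux
variable {A : Type*} [CommRing A] [Lattice A] [Module ℝ A] [FAlg A]
  {D : Type*} [AddCommGroup D] [Lattice D] [Module ℝ D] [RieszSp D]
  {N : Type*} [CommRing N] [Lattice N] [Module ℝ N] [FAlg N]
  (P : DualSetting A D N)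

lemma ev_nonneg {d : D} (hd : 0 ≤ d) {a : A} (ha : 0 ≤ a) : 0 ≤ P.dual d a :=
  (P.dual_order d).1 hd a ha

lemma ev_mono_left {d d' : D} (h : d ≤ d') {a : A} (ha : 0 ≤ a) :
    P.dual d a ≤ P.dual d' a := by
  have h2 := (P.dual_order (d' - d)).1 (sub_nonneg.2 h) a ha
  rw [map_sub, LinearMap.sub_apply] at h2
  linarith

lemma ev_mono_right {d : D} (hd : 0 ≤ d) {a b : A} (h : a ≤ b) :
    P.dual d a ≤ P.dual d b := by
  have h2 := ev_nonneg P hd (sub_nonneg.2 h)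
  rw [map_sub] at h2
  linarith

lemma le_of_ev {d d' : D} (h : ∀ a : A, 0 ≤ a → P.dual d a ≤ P.dual d' a) : d ≤ d' := by
  rw [← sub_nonneg]
  refine (P.dual_order _).2 fun a ha => ?_
  rw [map_sub, LinearMap.sub_apply]
  have := h a ha
  linarith

lemma eq_zero_of_ev {d : D} (h : ∀ a : A, 0 ≤ a → P.dual d a = 0) : d = 0 := by
  apply P.dual_inj
  rw [map_zero]
  ext x
  have h1 := h x⁺ (posPart_nonneg x)
  have h2 := h x⁻ (negPart_nonneg x)
  have h3 : P.dual d x = P.dual d x⁺ - P.dual d x⁻ := by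
    rw [← map_sub, posPart_sub_negPart]
  simp [h3, h1, h2]

lemma dsmul_nonneg {a : A} (ha : 0 ≤ a) {f : D} (hf : 0 ≤ f) : 0 ≤ P.dsmul a f :=
  (P.dual_order _).2 fun x hx => by
    rw [P.dsmul_eval]
    exact ev_nonneg P hf (FAlg.mul_nonneg a x ha hx)

lemma dsmul_mono {a b : A} (h : a ≤ b) (ha : 0 ≤ a) {f : D} (hf : 0 ≤ f) :
    P.dsmul a f ≤ P.dsmul b f := by
  refine le_of_ev P fun x hx => ?_
  rw [P.dsmul_eval, P.dsmul_eval]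
  exact ev_mono_right P hf (amul_mono h hx)

lemma bidual_nonneg {F : N} (hF : 0 ≤ F) {d : D} (hd : 0 ≤ d) : 0 ≤ P.bidual F d :=
  (P.bidual_order F).1 hF d hd

lemma bidual_mono {F : N} (hF : 0 ≤ F) {u v : D} (h : u ≤ v) :
    P.bidual F u ≤ P.bidual F v := by
  have h2 := bidual_nonneg P hF (sub_nonneg.2 h)
  rw [map_sub] at h2
  linarith

lemma nsmul_nonneg' {F : N} (hF : 0 ≤ F) {f : D} (hf : 0 ≤ f) : 0 ≤ P.nsmul F f :=
  (P.dual_order _).2 fun a ha => by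
    rw [P.nsmul_eval]
    exact bidual_nonneg P hF (dsmul_nonneg P ha hf)

end DualAux

section RK
variable {A : Type*} [CommRing A] [Lattice A] [Module ℝ A] [FAlg A]
  {D : Type*} [AddCommGroup D] [Lattice D] [Module ℝ D] [RieszSp D]
  {N : Type*} [CommRing N] [Lattice N] [Module ℝ N] [FAlg N]
  (P : DualSetting A D N)

def rkSet (d1 d2 : D) (x : A) : Set ℝ :=
  {r | ∃ b c : A, 0 ≤ b ∧ 0 ≤ c ∧ b + c = x ∧ r = P.dual d1 b + P.dual d2 c}

lemma rkSet_nonempty (d1 d2 : D) {x : A} (hx : 0 ≤ x) : (rkSet P d1 d2 x).Nonempty :=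
  ⟨P.dual d1 x + P.dual d2 0, x, 0, hx, le_rfl, add_zero x, rfl⟩

lemma rk_inf_eval (d1 d2 : D) (hd1 : 0 ≤ d1) (hd2 : 0 ≤ d2) {x : A} (hx : 0 ≤ x) :
    P.dual (d1 ⊓ d2) x = sInf (rkSet P d1 d2 x) := by
  set p : A → ℝ := fun y => sInf (rkSet P d1 d2 y) with hpdef
  have hbdd : ∀ y : A, BddBelow (rkSet P d1 d2 y) := by
    intro y
    refine ⟨0, fun r hr => ?_⟩
    obtain ⟨b, c, hb, hc, -, rfl⟩ := hr
    exact add_nonneg (ev_nonneg P hd1 hb) (ev_nonneg P hd2 hc)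
  have hple : ∀ {y b c : A}, 0 ≤ b → 0 ≤ c → b + c = y →
      p y ≤ P.dual d1 b + P.dual d2 c := by
    intro y b c hb hc hbc
    exact csInf_le (hbdd _) ⟨b, c, hb, hc, hbc, rfl⟩
  have hpnn : ∀ {y : A}, 0 ≤ y → 0 ≤ p y := by
    intro y hy
    refine le_csInf (rkSet_nonempty P d1 d2 hy) fun r hr => ?_
    obtain ⟨b, c, hb, hc, -, rfl⟩ := hr
    exact add_nonneg (ev_nonneg P hd1 hb) (ev_nonneg P hd2 hc)
  have hpd1 : ∀ {y : A}, 0 ≤ y → p y ≤ P.dual d1 y := by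
    intro y hy
    have := hple hy le_rfl (add_zero y)
    simpa using this
  have hadd : ∀ y z : A, 0 ≤ y → 0 ≤ z → p (y + z) = p y + p z := by
    intro y z hy hz
    apply le_antisymm
    · apply le_of_forall_pos_le_add
      intro ε hε
      obtain ⟨r1, hr1mem, hr1lt⟩ :=
        Real.lt_sInf_add_pos (rkSet_nonempty P d1 d2 hy) (half_pos hε)
      obtain ⟨b1, c1, hb1, hc1, hbc1, rfl⟩ := hr1mem
      obtain ⟨r2, hr2mem, hr2lt⟩ :=
        Real.lt_sInf_add_pos (rkSet_nonempty P d1 d2 hz) (half_pos hε)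
      obtain ⟨b2, c2, hb2, hc2, hbc2, rfl⟩ := hr2mem
      have hm : p (y + z) ≤ P.dual d1 (b1 + b2) + P.dual d2 (c1 + c2) :=
        hple (add_nonneg hb1 hb2) (add_nonneg hc1 hc2)
          (by rw [← hbc1, ← hbc2]; abel)
      have heq : P.dual d1 (b1 + b2) + P.dual d2 (c1 + c2) =
          (P.dual d1 b1 + P.dual d2 c1) + (P.dual d1 b2 + P.dual d2 c2) := by
        simp only [map_add]
        ring
      rw [heq] at hm
      have : sInf (rkSet P d1 d2 y) = p y := rfl
      linarith
    · refine le_csInf (rkSet_nonempty P d1 d2 (add_nonneg hy hz)) ?_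
      rintro r ⟨b, c, hb, hc, hbc, rfl⟩
      have hb2eq : b - b ⊓ y = (b - y)⁺ := (eq_sub_of_add_eq' (inf_add_posPart_sub b y)).symm
      have hb1nn : 0 ≤ b ⊓ y := le_inf hb hy
      have hb2nn : 0 ≤ b - b ⊓ y := by rw [hb2eq]; exact posPart_nonneg _
      have hb2z : b - b ⊓ y ≤ z := by
        rw [hb2eq, posPart_def]
        refine sup_le ?_ hz
        have hbyz : b ≤ y + z := by
          rw [← hbc]
          exact le_add_of_nonneg_right hc
        exact sub_le_iff_le_add'.2 hbyz
      have hc1 : 0 ≤ y - b ⊓ y := sub_nonneg.2 inf_le_right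
      have hc2 : 0 ≤ z - (b - b ⊓ y) := sub_nonneg.2 hb2z
      have hy1 : p y ≤ P.dual d1 (b ⊓ y) + P.dual d2 (y - b ⊓ y) :=
        hple hb1nn hc1 (by abel)
      have hz1 : p z ≤ P.dual d1 (b - b ⊓ y) + P.dual d2 (z - (b - b ⊓ y)) :=
        hple hb2nn hc2 (by abel)
      have hceq : c = y + z - b := by rw [← hbc]; abel
      have hsum1 : P.dual d1 (b ⊓ y) + P.dual d1 (b - b ⊓ y) = P.dual d1 b := by
        rw [← map_add]; congr 1; abel
      have hsum2 : P.dual d2 (y - b ⊓ y) + P.dual d2 (z - (b - b ⊓ y)) = P.dual d2 c := by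
        rw [← map_add]; congr 1; rw [hceq]; abel
      linarith
  have hsmul0 : ∀ (r : ℝ) (y : A), 0 < r → 0 ≤ y → p (r • y) ≤ r * p y := by
    intro r y hr hy
    apply le_of_forall_pos_le_add
    intro ε hε
    obtain ⟨v, hvmem, hvlt⟩ :=
      Real.lt_sInf_add_pos (rkSet_nonempty P d1 d2 hy) (div_pos hε hr)
    obtain ⟨b, c, hb, hc, hbc, rfl⟩ := hvmem
    have hm : p (r • y) ≤ P.dual d1 (r • b) + P.dual d2 (r • c) :=
      hple (RieszSp.smul_nonneg r b hr.le hb) (RieszSp.smul_nonneg r c hr.le hc)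
        (by rw [← smul_add, hbc])
    rw [map_smul, map_smul, smul_eq_mul, smul_eq_mul] at hm
    have h3 : r * (P.dual d1 b + P.dual d2 c) < r * (p y + ε / r) :=
      mul_lt_mul_of_pos_left hvlt hr
    have h4 : r * (p y + ε / r) = r * p y + ε := by
      field_simp
    nlinarith [hm]
  have hsmul : ∀ (r : ℝ) (y : A), 0 ≤ r → 0 ≤ y → p (r • y) = r * p y := by
    intro r y hr hy
    rcases eq_or_lt_of_le hr with h | hrpos
    · rw [← h, zero_smul, zero_mul]
      apply le_antisymm
      · have := hple (le_rfl : (0:A) ≤ 0) le_rfl (add_zero 0)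
        simpa using this
      · exact hpnn le_rfl
    · apply le_antisymm (hsmul0 r y hrpos hy)
      have h2 := hsmul0 r⁻¹ (r • y) (inv_pos.2 hrpos) (RieszSp.smul_nonneg r y hrpos.le hy)
      rw [inv_smul_smul₀ hrpos.ne'] at h2
      calc r * p y ≤ r * (r⁻¹ * p (r • y)) := mul_le_mul_of_nonneg_left h2 hrpos.le
        _ = p (r • y) := by field_simp
  obtain ⟨φ, hφ⟩ := extend_cone p hadd hsmul
  have hφbdd : OrderBddFn φ := by
    intro l u
    refine ⟨P.dual d1 u⁺ + P.dual d1 l⁻, fun y hly hyu => ?_⟩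
    have e1 : φ y = p y⁺ - p y⁻ := by
      conv_lhs => rw [← posPart_sub_negPart y]
      rw [map_sub, hφ _ (posPart_nonneg y), hφ _ (negPart_nonneg y)]
    have p1 : p y⁺ ≤ P.dual d1 u⁺ :=
      (hpd1 (posPart_nonneg y)).trans (ev_mono_right P hd1 (posPart_mono hyu))
    have p2 : p y⁻ ≤ P.dual d1 l⁻ :=
      (hpd1 (negPart_nonneg y)).trans (ev_mono_right P hd1 (negPart_anti hly))
    have p3 : 0 ≤ p y⁺ := hpnn (posPart_nonneg y)
    have p4 : 0 ≤ p y⁻ := hpnn (negPart_nonneg y)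
    rw [e1]
    rw [abs_le]
    constructor <;> linarith
  obtain ⟨m, hm⟩ := P.dual_surj φ hφbdd
  have hmev : ∀ y : A, 0 ≤ y → P.dual m y = p y := fun y hy => by rw [hm]; exact hφ y hy
  have hm1 : m ≤ d1 := le_of_ev P fun y hy => by rw [hmev y hy]; exact hpd1 hy
  have hm2 : m ≤ d2 := le_of_ev P fun y hy => by
    rw [hmev y hy]
    have := hple le_rfl hy (zero_add y)
    simpa using this
  have hglb : d1 ⊓ d2 ≤ m := by
    refine le_of_ev P fun y hy => ?_
    rw [hmev y hy]
    refine le_csInf (rkSet_nonempty P d1 d2 hy) ?_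
    rintro r ⟨b, c, hb, hc, hbc, rfl⟩
    have h5 : P.dual (d1 ⊓ d2) y = P.dual (d1 ⊓ d2) b + P.dual (d1 ⊓ d2) c := by
      rw [← map_add, hbc]
    have l1 := ev_mono_left P (inf_le_left : d1 ⊓ d2 ≤ d1) hb
    have l2 := ev_mono_left P (inf_le_right : d1 ⊓ d2 ≤ d2) hc
    linarith
  have heq : d1 ⊓ d2 = m := le_antisymm hglb (le_inf hm1 hm2)
  rw [heq, hmev x hx]

lemma rk_le (d1 d2 : D) {x b c : A} (hb : 0 ≤ b) (hc : 0 ≤ c) (hbc : b + c = x) :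
    P.dual (d1 ⊓ d2) x ≤ P.dual d1 b + P.dual d2 c := by
  have h5 : P.dual (d1 ⊓ d2) x = P.dual (d1 ⊓ d2) b + P.dual (d1 ⊓ d2) c := by
    rw [← map_add, hbc]
  have l1 := ev_mono_left P (inf_le_left : d1 ⊓ d2 ≤ d1) hb
  have l2 := ev_mono_left P (inf_le_right : d1 ⊓ d2 ≤ d2) hc
  linarith

lemma rk_exists (d1 d2 : D) (hd1 : 0 ≤ d1) (hd2 : 0 ≤ d2) (h0 : d1 ⊓ d2 = 0)
    {x : A} (hx : 0 ≤ x) {ε : ℝ} (hε : 0 < ε) :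
    ∃ b c : A, 0 ≤ b ∧ 0 ≤ c ∧ b + c = x ∧ P.dual d1 b + P.dual d2 c < ε := by
  have h1 : sInf (rkSet P d1 d2 x) = 0 := by
    rw [← rk_inf_eval P d1 d2 hd1 hd2 hx, h0, map_zero]
    rfl
  obtain ⟨r, hrmem, hrlt⟩ := Real.lt_sInf_add_pos (rkSet_nonempty P d1 d2 hx) hε
  obtain ⟨b, c, hb, hc, hbc, rfl⟩ := hrmem
  rw [h1, zero_add] at hrlt
  exact ⟨b, c, hb, hc, hbc, hrlt⟩

end RK

section Directed
variable {A : Type*} [CommRing A] [Lattice A] [Module ℝ A] [FAlg A]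
  {D : Type*} [AddCommGroup D] [Lattice D] [Module ℝ D] [RieszSp D]
  {N : Type*} [CommRing N] [Lattice N] [Module ℝ N] [FAlg N]
  (P : DualSetting A D N)

lemma lub_of_directed (S : Set D) (hne : S.Nonempty) (hdir : DirectedOn (· ≤ ·) S)
    (h0 : ∀ s ∈ S, (0:D) ≤ s) (bd : D) (hbd : ∀ s ∈ S, s ≤ bd) :
    ∃ v : D, IsLUB S v ∧ ∀ a : A, 0 ≤ a →
      P.dual v a = sSup ((fun s => P.dual s a) '' S) := by
  set p : A → ℝ := fun y => sSup ((fun s => P.dual s y) '' S) with hpdef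
  have hbddy : ∀ {y : A}, 0 ≤ y → BddAbove ((fun s => P.dual s y) '' S) := by
    intro y hy
    refine ⟨P.dual bd y, ?_⟩
    rintro r ⟨s, hs, rfl⟩
    exact ev_mono_left P (hbd s hs) hy
  have hney : ∀ y : A, ((fun s => P.dual s y) '' S).Nonempty := fun y => hne.image _
  have hle : ∀ {y : A}, 0 ≤ y → ∀ s ∈ S, P.dual s y ≤ p y := by
    intro y hy s hs
    exact le_csSup (hbddy hy) ⟨s, hs, rfl⟩
  have hpnn : ∀ {y : A}, 0 ≤ y → 0 ≤ p y := by
    intro y hy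
    obtain ⟨s0, hs0⟩ := hne
    exact (ev_nonneg P (h0 s0 hs0) hy).trans (hle hy s0 hs0)
  have hpbd : ∀ {y : A}, 0 ≤ y → p y ≤ P.dual bd y := by
    intro y hy
    refine csSup_le (hney y) ?_
    rintro r ⟨s, hs, rfl⟩
    exact ev_mono_left P (hbd s hs) hy
  have hadd : ∀ y z : A, 0 ≤ y → 0 ≤ z → p (y + z) = p y + p z := by
    intro y z hy hz
    apply le_antisymm
    · refine csSup_le (hney _) ?_
      rintro r ⟨s, hs, rfl⟩
      dsimp only
      rw [map_add]
      exact add_le_add (hle hy s hs) (hle hz s hs)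
    · apply le_of_forall_pos_le_add
      intro ε hε
      obtain ⟨r1, hr1mem, hr1⟩ := exists_lt_of_lt_csSup (hney y)
        (show p y - ε/2 < p y by linarith)
      obtain ⟨s1, hs1, rfl⟩ := hr1mem
      obtain ⟨r2, hr2mem, hr2⟩ := exists_lt_of_lt_csSup (hney z)
        (show p z - ε/2 < p z by linarith)
      obtain ⟨s2, hs2, rfl⟩ := hr2mem
      obtain ⟨s, hs, hss1, hss2⟩ := hdir s1 hs1 s2 hs2
      have h1 : P.dual s1 y ≤ P.dual s y := ev_mono_left P hss1 hy
      have h2 : P.dual s2 z ≤ P.dual s z := ev_mono_left P hss2 hz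
      have h3 : P.dual s (y + z) ≤ p (y + z) := hle (add_nonneg hy hz) s hs
      rw [map_add] at h3
      linarith
  have hsmul0 : ∀ (r : ℝ) (y : A), 0 < r → 0 ≤ y → p (r • y) ≤ r * p y := by
    intro r y hr hy
    refine csSup_le (hney _) ?_
    rintro w ⟨s, hs, rfl⟩
    dsimp only
    rw [map_smul, smul_eq_mul]
    exact mul_le_mul_of_nonneg_left (hle hy s hs) hr.le
  have hsmul : ∀ (r : ℝ) (y : A), 0 ≤ r → 0 ≤ y → p (r • y) = r * p y := by
    intro r y hr hy
    rcases eq_or_lt_of_le hr with h | hrpos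
    · rw [← h, zero_smul, zero_mul]
      apply le_antisymm
      · refine csSup_le (hney _) ?_
        rintro w ⟨s, hs, rfl⟩
        dsimp only
        rw [map_zero]
      · exact hpnn le_rfl
    · apply le_antisymm (hsmul0 r y hrpos hy)
      have h2 := hsmul0 r⁻¹ (r • y) (inv_pos.2 hrpos) (RieszSp.smul_nonneg r y hrpos.le hy)
      rw [inv_smul_smul₀ hrpos.ne'] at h2
      calc r * p y ≤ r * (r⁻¹ * p (r • y)) := mul_le_mul_of_nonneg_left h2 hrpos.le
        _ = p (r • y) := by field_simp
  obtain ⟨φ, hφ⟩ := extend_cone p hadd hsmul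
  have hφbdd : OrderBddFn φ := by
    intro l u
    refine ⟨P.dual bd u⁺ + P.dual bd l⁻, fun y hly hyu => ?_⟩
    have e1 : φ y = p y⁺ - p y⁻ := by
      conv_lhs => rw [← posPart_sub_negPart y]
      rw [map_sub, hφ _ (posPart_nonneg y), hφ _ (negPart_nonneg y)]
    have hbd0 : (0:D) ≤ bd := by
      obtain ⟨s0, hs0⟩ := hne
      exact le_trans (h0 s0 hs0) (hbd s0 hs0)
    have p1 : p y⁺ ≤ P.dual bd u⁺ :=
      (hpbd (posPart_nonneg y)).trans (ev_mono_right P hbd0 (posPart_mono hyu))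
    have p2 : p y⁻ ≤ P.dual bd l⁻ := by
      exact (hpbd (negPart_nonneg y)).trans (ev_mono_right P hbd0 (negPart_anti hly))
    have p3 : 0 ≤ p y⁺ := hpnn (posPart_nonneg y)
    have p4 : 0 ≤ p y⁻ := hpnn (negPart_nonneg y)
    rw [e1, abs_le]
    constructor <;> linarith
  obtain ⟨v, hv⟩ := P.dual_surj φ hφbdd
  have hvev : ∀ y : A, 0 ≤ y → P.dual v y = p y := fun y hy => by rw [hv]; exact hφ y hy
  refine ⟨v, ⟨?_, ?_⟩, hvev⟩
  · intro s hs
    refine le_of_ev P fun y hy => ?_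
    rw [hvev y hy]
    exact hle hy s hs
  · intro w hw
    refine le_of_ev P fun y hy => ?_
    rw [hvev y hy]
    refine csSup_le (hney y) ?_
    rintro r ⟨s, hs, rfl⟩
    exact ev_mono_left P (hw hs) hy

lemma glb_of_directed (S : Set D) (hne : S.Nonempty) (hdir : DirectedOn (· ≥ ·) S)
    (h0 : ∀ s ∈ S, (0:D) ≤ s) :
    ∃ v : D, IsGLB S v ∧ ∀ a : A, 0 ≤ a →
      P.dual v a = sInf ((fun s => P.dual s a) '' S) := by
  set p : A → ℝ := fun y => sInf ((fun s => P.dual s y) '' S) with hpdef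
  have hbddy : ∀ {y : A}, 0 ≤ y → BddBelow ((fun s => P.dual s y) '' S) := by
    intro y hy
    refine ⟨0, ?_⟩
    rintro r ⟨s, hs, rfl⟩
    exact ev_nonneg P (h0 s hs) hy
  have hney : ∀ y : A, ((fun s => P.dual s y) '' S).Nonempty := fun y => hne.image _
  have hle : ∀ {y : A}, 0 ≤ y → ∀ s ∈ S, p y ≤ P.dual s y := by
    intro y hy s hs
    exact csInf_le (hbddy hy) ⟨s, hs, rfl⟩
  have hpnn : ∀ {y : A}, 0 ≤ y → 0 ≤ p y := by
    intro y hy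
    refine le_csInf (hney y) ?_
    rintro r ⟨s, hs, rfl⟩
    exact ev_nonneg P (h0 s hs) hy
  have hadd : ∀ y z : A, 0 ≤ y → 0 ≤ z → p (y + z) = p y + p z := by
    intro y z hy hz
    apply le_antisymm
    · apply le_of_forall_pos_le_add
      intro ε hε
      obtain ⟨r1, hr1mem, hr1⟩ := Real.lt_sInf_add_pos (hney y) (half_pos hε)
      obtain ⟨s1, hs1, rfl⟩ := hr1mem
      obtain ⟨r2, hr2mem, hr2⟩ := Real.lt_sInf_add_pos (hney z) (half_pos hε)
      obtain ⟨s2, hs2, rfl⟩ := hr2mem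
      obtain ⟨s, hs, hss1, hss2⟩ := hdir s1 hs1 s2 hs2
      have h1 : P.dual s y ≤ P.dual s1 y := ev_mono_left P hss1 hy
      have h2 : P.dual s z ≤ P.dual s2 z := ev_mono_left P hss2 hz
      have h3 : p (y + z) ≤ P.dual s (y + z) := hle (add_nonneg hy hz) s hs
      rw [map_add] at h3
      have : sInf ((fun s => P.dual s y) '' S) = p y := rfl
      linarith
    · refine le_csInf (hney _) ?_
      rintro r ⟨s, hs, rfl⟩
      dsimp only
      rw [map_add]
      exact add_le_add (hle hy s hs) (hle hz s hs)
  have hsmul0 : ∀ (r : ℝ) (y : A), 0 < r → 0 ≤ y → r * p y ≤ p (r • y) := by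
    intro r y hr hy
    refine le_csInf (hney _) ?_
    rintro w ⟨s, hs, rfl⟩
    dsimp only
    rw [map_smul, smul_eq_mul]
    exact mul_le_mul_of_nonneg_left (hle hy s hs) hr.le
  have hsmul : ∀ (r : ℝ) (y : A), 0 ≤ r → 0 ≤ y → p (r • y) = r * p y := by
    intro r y hr hy
    rcases eq_or_lt_of_le hr with h | hrpos
    · rw [← h, zero_smul, zero_mul]
      apply le_antisymm
      · obtain ⟨s0, hs0⟩ := hne
        have := hle le_rfl s0 hs0
        rwa [map_zero] at this
      · exact hpnn le_rfl
    · apply le_antisymm ?_ (hsmul0 r y hrpos hy)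
      have h2 := hsmul0 r⁻¹ (r • y) (inv_pos.2 hrpos) (RieszSp.smul_nonneg r y hrpos.le hy)
      rw [inv_smul_smul₀ hrpos.ne'] at h2
      calc p (r • y) = r * (r⁻¹ * p (r • y)) := by field_simp
        _ ≤ r * p y := mul_le_mul_of_nonneg_left h2 hrpos.le
  obtain ⟨φ, hφ⟩ := extend_cone p hadd hsmul
  obtain ⟨s0, hs0⟩ := hne
  have hφbdd : OrderBddFn φ := by
    intro l u
    refine ⟨P.dual s0 u⁺ + P.dual s0 l⁻, fun y hly hyu => ?_⟩
    have e1 : φ y = p y⁺ - p y⁻ := by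
      conv_lhs => rw [← posPart_sub_negPart y]
      rw [map_sub, hφ _ (posPart_nonneg y), hφ _ (negPart_nonneg y)]
    have p1 : p y⁺ ≤ P.dual s0 u⁺ :=
      (hle (posPart_nonneg y) s0 hs0).trans (ev_mono_right P (h0 s0 hs0) (posPart_mono hyu))
    have p2 : p y⁻ ≤ P.dual s0 l⁻ :=
      (hle (negPart_nonneg y) s0 hs0).trans (ev_mono_right P (h0 s0 hs0) (negPart_anti hly))
    have p3 : 0 ≤ p y⁺ := hpnn (posPart_nonneg y)
    have p4 : 0 ≤ p y⁻ := hpnn (negPart_nonneg y)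
    rw [e1, abs_le]
    constructor <;> linarith
  obtain ⟨v, hv⟩ := P.dual_surj φ hφbdd
  have hvev : ∀ y : A, 0 ≤ y → P.dual v y = p y := fun y hy => by rw [hv]; exact hφ y hy
  refine ⟨v, ⟨?_, ?_⟩, hvev⟩
  · intro s hs
    refine le_of_ev P fun y hy => ?_
    rw [hvev y hy]
    exact hle hy s hs
  · intro w hw
    refine le_of_ev P fun y hy => ?_
    rw [hvev y hy]
    refine le_csInf (hney y) ?_
    rintro r ⟨s, hs, rfl⟩
    exact ev_mono_left P (hw hs) hy

end Directed

section Main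
variable {A : Type*} [CommRing A] [Lattice A] [Module ℝ A] [FAlg A]
  {D : Type*} [AddCommGroup D] [Lattice D] [Module ℝ D] [RieszSp D]
  {N : Type*} [CommRing N] [Lattice N] [Module ℝ N] [FAlg N]
  (P : DualSetting A D N)

/-- Claim K : an element `0 ≤ e ≤ a ⋅ f` with `e a = 0` vanishes. -/
lemma claimK {f : D} (hf : 0 ≤ f) {a : A} (ha : 0 ≤ a) {e : D} (he0 : 0 ≤ e)
    (hed : e ≤ P.dsmul a f) (hea : P.dual e a = 0) : e = 0 := by
  refine eq_zero_of_ev P fun x hx => ?_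
  have hmain : ∀ n : ℕ, (n : ℝ) * P.dual e x ≤ P.dual f (x * x) := by
    intro n
    have hid : x ⊓ (n • a) + (x - n • a)⁺ = x := inf_add_posPart_sub x (n • a)
    have h1 : P.dual e (x ⊓ (n • a)) ≤ 0 := by
      have h2 : P.dual e (x ⊓ (n • a)) ≤ P.dual e (n • a) :=
        ev_mono_right P he0 inf_le_right
      rw [map_nsmul, hea, smul_zero] at h2
      exact h2
    have h2 : P.dual e ((x - n • a)⁺) ≤ P.dual f (a * (x - n • a)⁺) := by
      have h3 := ev_mono_left P hed (posPart_nonneg (x - n • a))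
      rwa [P.dsmul_eval] at h3
    have h3 : (n : ℝ) * P.dual f (a * (x - n • a)⁺) ≤ P.dual f (x * x) := by
      have h4 := ev_mono_right P hf (ineq_E2 a x ha hx n)
      rwa [map_nsmul, nsmul_eq_mul] at h4
    have h4 : P.dual e x = P.dual e (x ⊓ (n • a)) + P.dual e ((x - n • a)⁺) := by
      rw [← map_add, hid]
    have h5 : P.dual e x ≤ P.dual f (a * (x - n • a)⁺) := by linarith
    calc (n : ℝ) * P.dual e x ≤ (n : ℝ) * P.dual f (a * (x - n • a)⁺) :=
          mul_le_mul_of_nonneg_left h5 (Nat.cast_nonneg n)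
      _ ≤ P.dual f (x * x) := h3
  refine le_antisymm ?_ (ev_nonneg P he0 hx)
  by_contra hpos
  push_neg at hpos
  obtain ⟨n, hn⟩ := exists_nat_gt (P.dual f (x * x) / P.dual e x)
  have := hmain n
  rw [div_lt_iff₀ hpos] at hn
  linarith

/-- Static lemma: if `f ⊥ g` then `(a ⋅ f) ⊥ g` for `a ≥ 0`. -/
lemma staticS1 {f g : D} (hf : 0 ≤ f) (hg : 0 ≤ g) (hfg : f ⊓ g = 0)
    {a : A} (ha : 0 ≤ a) : (P.dsmul a f) ⊓ g = 0 := by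
  have hd0 : 0 ≤ P.dsmul a f := dsmul_nonneg P ha hf
  refine eq_zero_of_ev P fun x hx => ?_
  refine le_antisymm ?_ (ev_nonneg P (le_inf hd0 hg) hx)
  have key : ∀ ε : ℝ, 0 < ε → P.dual ((P.dsmul a f) ⊓ g) x ≤ ε := by
    intro ε hε
    -- choose n with dual f x < n * (ε/2)
    obtain ⟨n, hn⟩ := exists_nat_gt (max 0 (P.dual f x / (ε / 2)))
    have hn0 : (0:ℝ) < n := lt_of_le_of_lt (le_max_left _ _) hn
    have hnx : P.dual f x < (n : ℝ) * (ε / 2) := by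
      have h1 : P.dual f x / (ε / 2) < (n : ℝ) := lt_of_le_of_lt (le_max_right _ _) hn
      have h2 : 0 < ε / 2 := half_pos hε
      calc P.dual f x = (P.dual f x / (ε / 2)) * (ε / 2) := by field_simp
        _ < (n : ℝ) * (ε / 2) := by
            exact mul_lt_mul_of_pos_right h1 h2
    set δ := ε / (2 * ((n : ℝ) + 1)) with hδ
    have hδpos : 0 < δ := by positivity
    have hax : (0:A) ≤ a * x := FAlg.mul_nonneg a x ha hx
    obtain ⟨w, c, hw, hc, hwc, hval⟩ := rk_exists P f g hf hg hfg hax hδpos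
    -- c = a*x - w
    have hceq : c = a * x - w := by rw [← hwc]; abel
    set y := (x - n • (a * x - w))⁺ with hy
    have hy0 : 0 ≤ y := posPart_nonneg _
    have hs0 : 0 ≤ a * x - w := by rw [← hceq]; exact hc
    have hyx : y ≤ x := by
      rw [hy]
      exact (posPart_mono (sub_le_self _ (nsmul_nonneg hs0 n))).trans_eq
        (posPart_eq_self.2 hx)
    have hxy : x - y = x ⊓ (n • (a * x - w)) := by
      have h := inf_add_posPart_sub x (n • (a * x - w))
      rw [← hy] at h
      exact (eq_sub_of_add_eq h).symm
    -- g part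
    have hgpart : P.dual g (x - y) ≤ (n : ℝ) * δ := by
      rw [hxy]
      have h1 : P.dual g (x ⊓ (n • (a * x - w))) ≤ (n:ℝ) * P.dual g (a * x - w) := by
        have h1' : P.dual g (x ⊓ (n • (a * x - w))) ≤ P.dual g (n • (a * x - w)) :=
          ev_mono_right P hg inf_le_right
        rw [map_nsmul] at h1'
        simpa using h1'
      have h2 : P.dual g (a * x - w) < δ := by
        rw [← hceq]
        have h3 : 0 ≤ P.dual f w := ev_nonneg P hf hw
        linarith
      have h4 : (n:ℝ) * P.dual g (a * x - w) ≤ (n:ℝ) * δ := by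
        apply mul_le_mul_of_nonneg_left h2.le (Nat.cast_nonneg n)
      linarith
    -- f part
    have hfpart : P.dual f (a * y) ≤ δ + ε / 2 := by
      have hE := ineq_E1 a x w ha hx hw (by rw [← hwc]; exact le_add_of_nonneg_right hc) n
      rw [← hy] at hE
      have h1 := ev_mono_right P hf hE
      rw [map_nsmul, map_add, map_nsmul, nsmul_eq_mul, nsmul_eq_mul] at h1
      -- n * dual f (a*y) ≤ n * dual f w + dual f x
      have h2 : P.dual f w < δ := by
        have h3 : 0 ≤ P.dual g c := ev_nonneg P hg hc
        linarith
      have h4 : (n:ℝ) * P.dual f (a * y) ≤ (n:ℝ) * δ + (n:ℝ) * (ε/2) := by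
        have h5 : (n:ℝ) * P.dual f w ≤ (n:ℝ) * δ :=
          mul_le_mul_of_nonneg_left h2.le (Nat.cast_nonneg n)
        linarith
      have h6 := le_of_mul_le_mul_left (by linarith : (n:ℝ) * P.dual f (a * y) ≤ (n:ℝ) * (δ + ε/2)) hn0
      exact h6
    have hrk : P.dual ((P.dsmul a f) ⊓ g) x ≤ P.dual (P.dsmul a f) y + P.dual g (x - y) :=
      rk_le P _ _ hy0 (sub_nonneg.2 hyx) (by abel)
    rw [P.dsmul_eval] at hrk
    have hδbound : δ + ε/2 + (n:ℝ) * δ = ε/2 + ((n:ℝ) + 1) * δ := by ring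
    have hδval : ((n:ℝ) + 1) * δ = ε / 2 := by
      rw [hδ]
      field_simp
    calc P.dual ((P.dsmul a f) ⊓ g) x ≤ P.dual f (a * y) + P.dual g (x - y) := hrk
      _ ≤ (δ + ε/2) + (n:ℝ) * δ := add_le_add hfpart hgpart
      _ = ε/2 + ((n:ℝ) + 1) * δ := by ring
      _ = ε := by rw [hδval]; ring
  refine le_of_forall_pos_le_add fun ε hε => ?_
  simpa using key ε hε

lemma small_of_cont (F : N) (hF : 0 ≤ F) (dd : D) {a : A} (ha : 0 ≤ a)
    (hK : ∀ e : D, 0 ≤ e → e ≤ dd → P.dual e a = 0 → e = 0)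
    (e : ℕ → D) (he0 : ∀ n, 0 ≤ e n) (hed : ∀ n, e n ≤ dd)
    (hev : ∀ n, P.dual (e n) a ≤ (2:ℝ)⁻¹ ^ n)
    {ε : ℝ} (hε : 0 < ε) :
    ∃ M : ℕ, ∀ n, M ≤ n → P.bidual F (e n) < ε := by
  classical
  set T : ℕ → Set D := fun M =>
    {t | ∃ s : Finset ℕ, ∃ hs : s.Nonempty, (∀ i ∈ s, M ≤ i) ∧ t = s.sup' hs e} with hT
  have emem : ∀ n M : ℕ, M ≤ n → e n ∈ T M := by
    intro n M h
    refine ⟨{n}, Finset.singleton_nonempty n, ?_, ?_⟩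
    · intro i hi
      rw [Finset.mem_singleton] at hi
      omega
    · rw [Finset.sup'_singleton]
  have Tne : ∀ M, (T M).Nonempty := fun M => ⟨e M, emem M M le_rfl⟩
  have Tpos : ∀ M, ∀ t ∈ T M, (0:D) ≤ t := by
    rintro M t ⟨s, hs, hbd, rfl⟩
    obtain ⟨i, hi⟩ := hs
    exact (he0 i).trans (Finset.le_sup' e hi)
  have Tbd : ∀ M, ∀ t ∈ T M, t ≤ dd := by
    rintro M t ⟨s, hs, hbd, rfl⟩
    exact Finset.sup'_le hs e fun i _ => hed i
  have Tdir : ∀ M, DirectedOn (· ≤ ·) (T M) := by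
    rintro M t1 ⟨s1, hs1, hb1, rfl⟩ t2 ⟨s2, hs2, hb2, rfl⟩
    have hsu : (s1 ∪ s2).Nonempty := hs1.mono Finset.subset_union_left
    refine ⟨(s1 ∪ s2).sup' hsu e, ⟨s1 ∪ s2, hsu, ?_, rfl⟩, ?_, ?_⟩
    · intro i hi
      rcases Finset.mem_union.1 hi with h | h
      · exact hb1 i h
      · exact hb2 i h
    · exact Finset.sup'_le hs1 e fun i hi => Finset.le_sup' e (Finset.mem_union_left _ hi)
    · exact Finset.sup'_le hs2 e fun i hi => Finset.le_sup' e (Finset.mem_union_right _ hi)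
  have evsup : ∀ (s : Finset ℕ) (hs : s.Nonempty),
      P.dual (s.sup' hs e) a ≤ ∑ i ∈ s, P.dual (e i) a := by
    intro s hs
    induction hs using Finset.Nonempty.cons_induction with
    | singleton i => simp
    | cons i s hi hs ih =>
      rw [Finset.sup'_cons hs, Finset.sum_cons]
      have h1 : e i ⊔ s.sup' hs e ≤ e i + s.sup' hs e := by
        refine sup_le (le_add_of_nonneg_right ?_) (le_add_of_nonneg_left (he0 i))
        obtain ⟨j, hj⟩ := hs
        exact (he0 j).trans (Finset.le_sup' e hj)
      calc P.dual (e i ⊔ s.sup' hs e) a ≤ P.dual (e i + s.sup' hs e) a :=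
            ev_mono_left P h1 ha
        _ = P.dual (e i) a + P.dual (s.sup' hs e) a := by
            rw [map_add, LinearMap.add_apply]
        _ ≤ P.dual (e i) a + ∑ i ∈ s, P.dual (e i) a := by linarith [ih]
  have Teval : ∀ M, ∀ t ∈ T M, P.dual t a ≤ 2 * (2:ℝ)⁻¹ ^ M := by
    rintro M t ⟨s, hs, hbd, rfl⟩
    have h1 := evsup s hs
    have h2 : ∑ i ∈ s, P.dual (e i) a ≤ ∑ i ∈ s, (2:ℝ)⁻¹ ^ i :=
      Finset.sum_le_sum fun i _ => hev i
    have h3 : s ⊆ Finset.Ico M (s.max' hs + 1) := by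
      intro i hi
      rw [Finset.mem_Ico]
      exact ⟨hbd i hi, Nat.lt_succ_of_le (Finset.le_max' s i hi)⟩
    have h4 : ∑ i ∈ s, (2:ℝ)⁻¹ ^ i ≤ ∑ i ∈ Finset.Ico M (s.max' hs + 1), (2:ℝ)⁻¹ ^ i :=
      Finset.sum_le_sum_of_subset_of_nonneg h3 fun i _ _ => by positivity
    have hMle : M ≤ s.max' hs + 1 := Nat.le_succ_of_le (hbd _ (s.max'_mem hs))
    have h5 : ∑ i ∈ Finset.Ico M (s.max' hs + 1), (2:ℝ)⁻¹ ^ i ≤ 2 * (2:ℝ)⁻¹ ^ M := by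
      rw [geom_sum_Ico (by norm_num : (2:ℝ)⁻¹ ≠ 1) hMle]
      have hp1 : (0:ℝ) ≤ (2:ℝ)⁻¹ ^ (s.max' hs + 1) := by positivity
      have : ((2:ℝ)⁻¹ ^ (s.max' hs + 1) - (2:ℝ)⁻¹ ^ M) / ((2:ℝ)⁻¹ - 1) =
          2 * ((2:ℝ)⁻¹ ^ M - (2:ℝ)⁻¹ ^ (s.max' hs + 1)) := by
        ring
      rw [this]
      linarith
    linarith
  have hVex : ∀ M : ℕ, ∃ v : D, IsLUB (T M) v ∧ ∀ y : A, 0 ≤ y →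
      P.dual v y = sSup ((fun s => P.dual s y) '' (T M)) :=
    fun M => lub_of_directed P (T M) (Tne M) (Tdir M) (Tpos M) dd (Tbd M)
  choose V hV1 hV2 using hVex
  have VeM : ∀ n M : ℕ, M ≤ n → e n ≤ V M := fun n M h => (hV1 M).1 (emem n M h)
  have Vpos : ∀ M, (0:D) ≤ V M := fun M => (he0 M).trans (VeM M M le_rfl)
  have Vbd : ∀ M, V M ≤ dd := fun M => (hV1 M).2 fun t ht => Tbd M t ht
  have Vanti : ∀ M M' : ℕ, M ≤ M' → V M' ≤ V M := by
    intro M M' h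
    refine (hV1 M').2 fun t ht => (hV1 M).1 ?_
    obtain ⟨s, hs, hbd, rfl⟩ := ht
    exact ⟨s, hs, fun i hi => h.trans (hbd i hi), rfl⟩
  have Veval : ∀ M, P.dual (V M) a ≤ 2 * (2:ℝ)⁻¹ ^ M := by
    intro M
    rw [hV2 M a ha]
    refine csSup_le ((Tne M).image _) ?_
    rintro r ⟨t, ht, rfl⟩
    exact Teval M t ht
  set C : Set D := Set.range V with hC
  have Cne : C.Nonempty := ⟨V 0, 0, rfl⟩
  have Cdir : DirectedOn (· ≥ ·) C := by
    rintro t1 ⟨M1, rfl⟩ t2 ⟨M2, rfl⟩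
    exact ⟨V (max M1 M2), ⟨max M1 M2, rfl⟩, Vanti M1 _ (le_max_left _ _),
      Vanti M2 _ (le_max_right _ _)⟩
  have Cpos : ∀ s ∈ C, (0:D) ≤ s := by rintro s ⟨M, rfl⟩; exact Vpos M
  obtain ⟨w, hwglb, hwev⟩ := glb_of_directed P C Cne Cdir Cpos
  have hw0 : 0 ≤ w := hwglb.2 fun t ht => by obtain ⟨M, rfl⟩ := ht; exact Vpos M
  have hwdd : w ≤ dd := (hwglb.1 ⟨0, rfl⟩).trans (Vbd 0)
  have hwa : P.dual w a = 0 := by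
    rw [hwev a ha]
    have hbdd : BddBelow ((fun s => P.dual s a) '' C) := by
      refine ⟨0, ?_⟩
      rintro r ⟨s, hs, rfl⟩
      exact ev_nonneg P (Cpos s hs) ha
    refine le_antisymm ?_ ?_
    · refine le_of_forall_pos_le_add fun η hη => ?_
      obtain ⟨M, hM⟩ := exists_pow_lt_of_lt_one (half_pos hη) (by norm_num : (2:ℝ)⁻¹ < 1)
      have h1 : sInf ((fun s => P.dual s a) '' C) ≤ P.dual (V M) a :=
        csInf_le hbdd ⟨V M, ⟨M, rfl⟩, rfl⟩
      have h2 := Veval M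
      linarith
    · refine le_csInf (Cne.image _) ?_
      rintro r ⟨s, hs, rfl⟩
      exact ev_nonneg P (Cpos s hs) ha
  have hwz : w = 0 := hK w hw0 hwdd hwa
  rw [hwz] at hwglb
  obtain ⟨d0, hd0C, hd0⟩ := P.bidual_cont F C Cne Cdir hwglb ε hε
  obtain ⟨M0, rfl⟩ := hd0C
  refine ⟨M0, fun n hn => ?_⟩
  have h1 : V n ≤ V M0 := Vanti M0 n hn
  have h2 := hd0 (V n) ⟨n, rfl⟩ h1
  have h3 : P.bidual F (e n) ≤ P.bidual F (V n) := bidual_mono P hF (VeM n n le_rfl)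
  calc P.bidual F (e n) ≤ P.bidual F (V n) := h3
    _ ≤ |P.bidual F (V n)| := le_abs_self _
    _ < ε := h2

/-- Main lemma: if `f ⊥ g` (both positive) and `0 ≤ F` then `(F ⋅ f) ⊥ g`. -/
lemma Cprime {f g : D} (hf : 0 ≤ f) (hg : 0 ≤ g) (hfg : f ⊓ g = 0)
    {F : N} (hF : 0 ≤ F) : (P.nsmul F f) ⊓ g = 0 := by
  have hnf : 0 ≤ P.nsmul F f := nsmul_nonneg' P hF hf
  have hh0 : 0 ≤ (P.nsmul F f) ⊓ g := le_inf hnf hg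
  refine eq_zero_of_ev P fun a ha => ?_
  set h := (P.nsmul F f) ⊓ g with hh
  have hd0 : 0 ≤ P.dsmul a f := dsmul_nonneg P ha hf
  have hS1 : (P.dsmul a f) ⊓ g = 0 := staticS1 P hf hg hfg ha
  have hhd : h ⊓ P.dsmul a f = 0 := by
    refine le_antisymm ?_ (le_inf hh0 hd0)
    calc h ⊓ P.dsmul a f ≤ g ⊓ P.dsmul a f :=
          inf_le_inf_right _ (inf_le_right : h ≤ g)
      _ = (P.dsmul a f) ⊓ g := inf_comm _ _
      _ = 0 := hS1
  have hdec : ∀ n : ℕ, ∃ b c : A, 0 ≤ b ∧ 0 ≤ c ∧ b + c = a ∧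
      P.dual h b + P.dual (P.dsmul a f) c < (2:ℝ)⁻¹ ^ n := by
    intro n
    exact rk_exists P h (P.dsmul a f) hh0 hd0 hhd ha (by positivity)
  choose b c hb hc hbc hval using hdec
  set e : ℕ → D := fun n => P.dsmul (c n) f with he
  have he0 : ∀ n, 0 ≤ e n := fun n => dsmul_nonneg P (hc n) hf
  have hed : ∀ n, e n ≤ P.dsmul a f := by
    intro n
    refine dsmul_mono P ?_ (hc n) hf
    rw [← hbc n]
    exact le_add_of_nonneg_left (hb n)
  have hev : ∀ n, P.dual (e n) a ≤ (2:ℝ)⁻¹ ^ n := by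
    intro n
    have h1 : P.dual (e n) a = P.dual (P.dsmul a f) (c n) := by
      rw [he]
      dsimp only
      rw [P.dsmul_eval, P.dsmul_eval, mul_comm]
    rw [h1]
    have h2 : 0 ≤ P.dual h (b n) := ev_nonneg P hh0 (hb n)
    linarith [hval n]
  have hK : ∀ e' : D, 0 ≤ e' → e' ≤ P.dsmul a f → P.dual e' a = 0 → e' = 0 :=
    fun e' h1 h2 h3 => claimK P hf ha h1 h2 h3
  refine le_antisymm ?_ (ev_nonneg P hh0 ha)
  refine le_of_forall_pos_le_add fun ε hε => ?_
  obtain ⟨M, hM⟩ := small_of_cont P F hF (P.dsmul a f) ha hK e he0 hed hev (half_pos hε)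
  obtain ⟨n₀, hn₀⟩ := exists_pow_lt_of_lt_one (half_pos hε) (by norm_num : (2:ℝ)⁻¹ < 1)
  set n := max M n₀ with hn
  have h1 : P.dual h a = P.dual h (b n) + P.dual h (c n) := by
    rw [← map_add, hbc n]
  have h2 : P.dual h (b n) < (2:ℝ)⁻¹ ^ n := by
    have h3 : 0 ≤ P.dual (P.dsmul a f) (c n) := ev_nonneg P hd0 (hc n)
    linarith [hval n]
  have h3 : P.dual h (c n) ≤ P.bidual F (e n) := by
    have h4 : P.dual h (c n) ≤ P.dual (P.nsmul F f) (c n) :=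
      ev_mono_left P (inf_le_left : h ≤ P.nsmul F f) (hc n)
    rwa [P.nsmul_eval] at h4
  have h5 : P.bidual F (e n) < ε / 2 := hM n (le_max_left _ _)
  have h6 : (2:ℝ)⁻¹ ^ n ≤ (2:ℝ)⁻¹ ^ n₀ :=
    pow_le_pow_of_le_one (by norm_num) (by norm_num) (le_max_right _ _)
  have h7 : P.dual h a < ε / 2 + ε / 2 := by linarith
  linarith

lemma bidual_abs_le (F : N) {u v : D} (h : |u| ≤ v) :
    P.bidual F u ≤ P.bidual |F| v := by
  have key : P.bidual |F| v - P.bidual F u =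
      P.bidual (F⁺) (v - u) + P.bidual (F⁻) (v + u) := by
    have h1 : |F| = F⁺ + F⁻ := (posPart_add_negPart F).symm
    have h2 : P.bidual F u = P.bidual (F⁺) u - P.bidual (F⁻) u := by
      conv_lhs => rw [← posPart_sub_negPart F]
      rw [map_sub, LinearMap.sub_apply]
    rw [h1, h2, map_add, LinearMap.add_apply, map_sub, map_add]
    ring
  have b1 : 0 ≤ P.bidual (F⁺) (v - u) :=
    bidual_nonneg P (posPart_nonneg F) (sub_nonneg.2 ((le_abs_self u).trans h))
  have b2 : 0 ≤ P.bidual (F⁻) (v + u) := by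
    refine bidual_nonneg P (negPart_nonneg F) ?_
    have h3 : -u ≤ v := (neg_le_abs u).trans h
    have h4 := add_le_add_right h3 u
    rwa [add_neg_cancel, add_comm] at h4
  linarith

lemma abs_nsmul_le (F : N) (f : D) : |P.nsmul F f| ≤ P.nsmul |F| |f| := by
  have habs : ∀ a : A, 0 ≤ a → |P.dsmul a f| ≤ P.dsmul a |f| := by
    intro a ha
    rw [abs_le']
    constructor
    · refine le_of_ev P fun x hx => ?_
      rw [P.dsmul_eval, P.dsmul_eval]
      exact ev_mono_left P (le_abs_self f) (FAlg.mul_nonneg a x ha hx)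
    · refine le_of_ev P fun x hx => ?_
      have h1 : P.dual (-(P.dsmul a f)) x = -(P.dual (P.dsmul a f) x) := by
        rw [map_neg, LinearMap.neg_apply]
      rw [h1, P.dsmul_eval, P.dsmul_eval]
      have h2 := ev_mono_left P (neg_le_abs f) (FAlg.mul_nonneg a x ha hx)
      rw [map_neg, LinearMap.neg_apply] at h2
      exact h2
  rw [abs_le']
  constructor
  · refine le_of_ev P fun a ha => ?_
    rw [P.nsmul_eval, P.nsmul_eval]
    exact bidual_abs_le P F (habs a ha)
  · refine le_of_ev P fun a ha => ?_
    have h1 : P.dual (-(P.nsmul F f)) a = P.bidual F (-(P.dsmul a f)) := by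
      rw [map_neg, LinearMap.neg_apply, P.nsmul_eval, map_neg]
    rw [h1, P.nsmul_eval]
    refine bidual_abs_le P F ?_
    rw [abs_neg]
    exact habs a ha

end Main

variable {A : Type*} [CommRing A] [Lattice A] [Module ℝ A] [FAlg A]
variable {D : Type*} [AddCommGroup D] [Lattice D] [Module ℝ D] [RieszSp D]
variable {N : Type*} [CommRing N] [Lattice N] [Module ℝ N] [FAlg N]
variable [P : DualSetting A D N]


/-- If `f ⊥ g` in `A^∼`, then `F ⋅ f ⊥ G ⋅ g` for all `F, G ∈ (A^∼)^∼_n`. -/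
theorem stmt3 (f g : D) (hfg : |f| ⊓ |g| = 0) (F G : N) :
    |P.nsmul F f| ⊓ |P.nsmul G g| = 0 := by
  have h1 := abs_nsmul_le P F f
  have h2 := abs_nsmul_le P G g
  have hf1 : 0 ≤ P.nsmul |F| |f| := nsmul_nonneg' P (abs_nonneg F) (abs_nonneg f)
  have c1 : (P.nsmul |F| |f|) ⊓ |g| = 0 :=
    Cprime P (abs_nonneg f) (abs_nonneg g) hfg (abs_nonneg F)
  have c2 : (P.nsmul |G| |g|) ⊓ (P.nsmul |F| |f|) = 0 :=
    Cprime P (abs_nonneg g) hf1 (by rw [inf_comm]; exact c1) (abs_nonneg G)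
  have hle : |P.nsmul F f| ⊓ |P.nsmul G g| ≤ (P.nsmul |F| |f|) ⊓ (P.nsmul |G| |g|) :=
    inf_le_inf h1 h2
  have hz : (P.nsmul |F| |f|) ⊓ (P.nsmul |G| |g|) = 0 := by rw [inf_comm]; exact c2
  exact le_antisymm (hle.trans_eq hz) (le_inf (abs_nonneg _) (abs_nonneg _))
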